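/- Let G be a group equipped with the word metric d_S with respect to a finite generating set S, and let H ≤ G be a subgroup. A subset C ⊆ G is H-almost invariant if and only if C is a coarse complementary component of H. -/

import Mathlib

open Metric Set
open scoped NNReal Pointwise

/-- The closed `r`-neighbourhood `N_r(A)` of a subset `A` of a metric space. -/
def nbhd {X : Type*} [PseudoMetricSpace X] (r : ℝ≥0) (A : Set X) : Set X :=
  {x : X | ∃ a ∈ A, nndist x a ≤ r}

/-- The word length of `g` with respect to a generating set `S`: the least `n` such
that `g` is a product of `n` elements of `S ∪ S⁻¹`. -/
noncomputable def wordLength {G : Type*} [Group G] (S : Set G) (g : G) : ℕ :=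
  sInf {n : ℕ | ∃ l : List G, (∀ x ∈ l, x ∈ S ∨ x⁻¹ ∈ S) ∧ l.prod = g ∧ l.length = n}

/-- The metric on `G` is the word metric with respect to `S`. -/
def IsWordMetric {G : Type*} [Group G] [MetricSpace G] (S : Set G) : Prop :=
  ∀ g h : G, dist g h = wordLength S (g⁻¹ * h)

/-- A subset `A ⊆ G` is `H`-finite if `A ⊆ H·R` for some finite `R ⊆ G`. -/
def HFinite {G : Type*} [Group G] (H : Subgroup G) (A : Set G) : Prop :=
  ∃ R : Set G, R.Finite ∧ A ⊆ (H : Set G) * R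

/-- The coarse `r`-boundary `∂_r C := {x ∈ X \ C : d(x,C) ≤ r}`. -/
def coarseBoundary {X : Type*} [PseudoMetricSpace X] (r : ℝ≥0) (C : Set X) : Set X :=
  {x : X | x ∉ C ∧ ∃ c ∈ C, nndist x c ≤ r}

/-- `C` is an `(r,A)`-coarse complementary component of `W`:
`∂_r (C \ N_A(W)) ⊆ N_A(W)`. -/
def IsCCC {X : Type*} [PseudoMetricSpace X] (r A : ℝ≥0) (W C : Set X) : Prop :=
  coarseBoundary r (C \ nbhd A W) ⊆ nbhd A W

/-- `C` is a coarse complementary component of `W`, i.e. an `(r,A)`-coarse complementary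
component for some `r ≥ 1`, `A ≥ 0`. -/
def IsCoarseCompComplement {X : Type*} [PseudoMetricSpace X] (W C : Set X) : Prop :=
  ∃ r A : ℝ≥0, 1 ≤ r ∧ IsCCC r A W C

/-- A coarse complementary component is shallow if contained in some neighbourhood of
`W`, and deep otherwise. -/
def IsShallow {X : Type*} [PseudoMetricSpace X] (W C : Set X) : Prop :=
  ∃ R : ℝ≥0, C ⊆ nbhd R W

/-- A subset `C ⊆ G` is `H`-almost invariant if for every `g ∈ G` the symmetric
difference of `C` and `Cg` is `H`-finite. -/
def HAlmostInvariant {G : Type*} [Group G] (H : Subgroup G) (C : Set G) : Prop :=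
  ∀ g : G, HFinite H (symmDiff C ((fun x => x * g) '' C))

set_option linter.unusedSectionVars false

section Aux
variable {G : Type*} [Group G] {S : Set G}

lemma wordSet_nonempty (hSgen : Subgroup.closure S = ⊤) (g : G) :
    {n : ℕ | ∃ l : List G, (∀ x ∈ l, x ∈ S ∨ x⁻¹ ∈ S) ∧ l.prod = g ∧ l.length = n}.Nonempty := by
  have hg : g ∈ Submonoid.closure (S ∪ S⁻¹) := by
    rw [← Subgroup.closure_toSubmonoid, hSgen]; trivial
  obtain ⟨l, hl, hp⟩ := Submonoid.exists_list_of_mem_closure hg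
  refine ⟨l.length, l, fun x hx => ?_, hp, rfl⟩
  rcases hl x hx with h | h
  · exact Or.inl h
  · exact Or.inr (Set.mem_inv.mp h)

lemma exists_word (hSgen : Subgroup.closure S = ⊤) (g : G) :
    ∃ l : List G, (∀ x ∈ l, x ∈ S ∨ x⁻¹ ∈ S) ∧ l.prod = g ∧ l.length = wordLength S g :=
  Nat.sInf_mem (wordSet_nonempty hSgen g)

lemma wordLength_le_length (l : List G) (hl : ∀ x ∈ l, x ∈ S ∨ x⁻¹ ∈ S) :
    wordLength S l.prod ≤ l.length := Nat.sInf_le ⟨l, hl, rfl, rfl⟩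

lemma wordLength_le_one {t : G} (ht : t ∈ S ∨ t⁻¹ ∈ S) : wordLength S t ≤ 1 :=
  Nat.sInf_le ⟨[t], by simpa using ht, by simp, rfl⟩

/-- Ball finiteness. -/
lemma ball_finite (hSfin : S.Finite) (hSgen : Subgroup.closure S = ⊤) (n : ℕ) :
    {g : G | wordLength S g ≤ n}.Finite := by
  induction n with
  | zero =>
    refine (Set.finite_singleton (1 : G)).subset fun g hg => ?_
    have h0 : wordLength S g = 0 := Nat.le_zero.mp hg
    obtain ⟨l, hl, hp, hlen⟩ := exists_word hSgen g
    have : l.length = 0 := hlen.trans h0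
    rw [List.length_eq_zero_iff] at this
    simp [this] at hp
    simp [← hp]
  | succ n ih =>
    have hT : (S ∪ S⁻¹).Finite := hSfin.union hSfin.inv
    refine (ih.union (ih.mul hT)).subset fun g hg => ?_
    obtain ⟨l, hl, hp, hlen⟩ := exists_word hSgen g
    rcases l.eq_nil_or_concat with rfl | ⟨l', t, rfl⟩
    · left
      simp only [List.prod_nil] at hp
      have : wordLength S g ≤ 0 := Nat.sInf_le ⟨[], by simp, hp, rfl⟩
      simpa using Nat.le_trans this (Nat.zero_le n)
    · right
      have ht : t ∈ S ∪ S⁻¹ := by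
        rcases hl t (by simp) with h | h
        · exact Or.inl h
        · exact Or.inr (Set.mem_inv.mpr h)
      have hl' : ∀ x ∈ l', x ∈ S ∨ x⁻¹ ∈ S := fun x hx => hl x (by simp [hx])
      have hlen' : l'.length ≤ n := by
        have := hg
        simp only [Set.mem_setOf_eq] at this
        have h2 : l'.length + 1 = wordLength S g := by simpa using hlen
        omega
      have hw : wordLength S l'.prod ≤ n := (wordLength_le_length l' hl').trans hlen'
      have : l'.prod * t = g := by simpa using hp
      rw [← this]
      exact Set.mul_mem_mul hw ht
end Aux

section MAux
variable {G : Type*} [Group G] [MetricSpace G] {S : Set G}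

lemma nndist_eq (hword : IsWordMetric S) (x y : G) :
    nndist x y = (wordLength S (x⁻¹ * y) : ℝ≥0) := by
  ext
  push_cast
  exact hword x y

lemma wordLength_inv (hword : IsWordMetric S) (g : G) :
    wordLength S g⁻¹ = wordLength S g := by
  have h1 : dist g 1 = wordLength S g⁻¹ := by simpa using hword g 1
  have h2 : dist (1:G) g = wordLength S g := by simpa using hword 1 g
  have := dist_comm g (1:G)
  rw [h1, h2] at this
  exact_mod_cast this
end MAux

section Part2
variable {X : Type*} [PseudoMetricSpace X]

lemma nbhd_mono {r r' : ℝ≥0} (h : r ≤ r') (W : Set X) : nbhd r W ⊆ nbhd r' W :=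
  fun _ ⟨a, ha, hd⟩ => ⟨a, ha, hd.trans h⟩

lemma nbhd_trans {W : Set X} {x y : X} {r s : ℝ≥0} (hy : y ∈ nbhd r W)
    (hd : nndist x y ≤ s) : x ∈ nbhd (r + s) W := by
  obtain ⟨a, ha, hya⟩ := hy
  refine ⟨a, ha, (nndist_triangle x y a).trans ?_⟩
  calc nndist x y + nndist y a ≤ s + r := add_le_add hd hya
  _ = r + s := add_comm _ _

end Part2

section Part3
variable {G : Type*} [Group G] [MetricSpace G] {S : Set G}

lemma hFinite_iff (hSfin : S.Finite) (hSgen : Subgroup.closure S = ⊤)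
    (hword : IsWordMetric S) (H : Subgroup G) (A : Set G) :
    HFinite H A ↔ ∃ ρ : ℝ≥0, A ⊆ nbhd ρ (H : Set G) := by
  constructor
  · rintro ⟨R, hRfin, hsub⟩
    obtain ⟨n, hn⟩ : ∃ n : ℕ, ∀ x ∈ R, wordLength S x ≤ n := by
      obtain ⟨n, hn⟩ := (hRfin.image (wordLength S)).bddAbove
      exact ⟨n, fun x hx => hn (Set.mem_image_of_mem _ hx)⟩
    refine ⟨(n : ℝ≥0), fun a ha => ?_⟩
    obtain ⟨h, hh, x, hx, rfl⟩ := Set.mem_mul.mp (hsub ha)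
    refine ⟨h, hh, ?_⟩
    rw [nndist_eq hword]
    have : (h * x)⁻¹ * h = x⁻¹ := by group
    rw [this, wordLength_inv hword]
    exact_mod_cast hn x hx
  · rintro ⟨ρ, hsub⟩
    refine ⟨{b : G | wordLength S b ≤ ⌈ρ⌉₊}, ball_finite hSfin hSgen _, fun x hx => ?_⟩
    obtain ⟨h, hh, hd⟩ := hsub hx
    rw [nndist_eq hword] at hd
    refine Set.mem_mul.mpr ⟨h, hh, h⁻¹ * x, ?_, by group⟩
    have h1 : wordLength S (h⁻¹ * x) = wordLength S (x⁻¹ * h) := by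
      rw [← wordLength_inv hword (x⁻¹ * h)]; congr 1; group
    simp only [Set.mem_setOf_eq, h1]
    have : (wordLength S (x⁻¹ * h) : ℝ≥0) ≤ (⌈ρ⌉₊ : ℝ≥0) := hd.trans (Nat.le_ceil ρ)
    exact_mod_cast this

lemma path_lemma (hword : IsWordMetric S) {r A : ℝ≥0} {W C : Set G} (h1 : 1 ≤ r)
    (hCCC : IsCCC r A W C) :
    ∀ l : List G, (∀ x ∈ l, x ∈ S ∨ x⁻¹ ∈ S) → ∀ c, c ∈ C \ nbhd A W →
      c * l.prod ∉ C \ nbhd A W →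
      ∃ y ∈ nbhd A W, nndist (c * l.prod) y ≤ (l.length : ℝ≥0) := by
  intro l
  induction l with
  | nil => intro _ c hc hnc; simp only [List.prod_nil, mul_one] at hnc; exact absurd hc hnc
  | cons t l' ih =>
    intro hl c hc hnc
    have ht : t ∈ S ∨ t⁻¹ ∈ S := hl t (by simp)
    have hl' : ∀ x ∈ l', x ∈ S ∨ x⁻¹ ∈ S := fun x hx => hl x (by simp [hx])
    have hprod : c * (t :: l').prod = (c * t) * l'.prod := by
      rw [List.prod_cons, mul_assoc]
    by_cases hct : c * t ∈ C \ nbhd A W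
    · obtain ⟨y, hy, hd⟩ := ih hl' (c * t) hct (by rwa [hprod] at hnc)
      refine ⟨y, hy, ?_⟩
      rw [hprod]
      refine hd.trans ?_
      exact_mod_cast Nat.cast_le.mpr (by simp : l'.length ≤ (t :: l').length)
    · -- c*t is in the coarse boundary
      have hone : (wordLength S t : ℝ≥0) ≤ 1 := by
        exact_mod_cast wordLength_le_one ht
      have hbd : c * t ∈ coarseBoundary r (C \ nbhd A W) := by
        refine ⟨hct, c, hc, ?_⟩
        rw [nndist_eq hword]
        have : (c * t)⁻¹ * c = t⁻¹ := by group
        rw [this, wordLength_inv hword]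
        exact hone.trans h1
      have hy : c * t ∈ nbhd A W := hCCC hbd
      refine ⟨c * t, hy, ?_⟩
      rw [hprod, nndist_eq hword]
      have : ((c * t) * l'.prod)⁻¹ * (c * t) = l'.prod⁻¹ := by group
      rw [this, wordLength_inv hword]
      have := wordLength_le_length l' hl'
      have hle : wordLength S l'.prod ≤ (t :: l').length := this.trans (by simp)
      exact_mod_cast hle

end Part3

section Main2
variable {G : Type*} [Group G] [MetricSpace G] {S : Set G}

lemma eq_one_of_wordLength_eq_zero (hSgen : Subgroup.closure S = ⊤) {g : G}
    (h : wordLength S g = 0) : g = 1 := by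
  obtain ⟨l, hl, hp, hlen⟩ := exists_word hSgen g
  rw [h, List.length_eq_zero_iff] at hlen
  simp [hlen] at hp
  exact hp.symm

lemma mem_gen_of_wordLength_eq_one (hSgen : Subgroup.closure S = ⊤) {g : G}
    (h : wordLength S g = 1) : g ∈ S ∨ g⁻¹ ∈ S := by
  obtain ⟨l, hl, hp, hlen⟩ := exists_word hSgen g
  rw [h, List.length_eq_one_iff] at hlen
  obtain ⟨t, rfl⟩ := hlen
  simp only [List.prod_cons, List.prod_nil, mul_one] at hp
  subst hp
  exact hl _ (by simp)

theorem hAlmostInvariant_iff_coarseComp' {G : Type*} [Group G] [MetricSpace G]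
    (S : Set G) (hSfin : S.Finite) (hSgen : Subgroup.closure S = ⊤)
    (hword : IsWordMetric S) (H : Subgroup G) (C : Set G) :
    HAlmostInvariant H C ↔ IsCoarseCompComplement (H : Set G) C := by
  constructor
  · intro hAI
    choose ρ hρ using fun g => (hFinite_iff hSfin hSgen hword H _).mp (hAI g)
    obtain ⟨A, hA⟩ : ∃ A : ℝ≥0, ∀ t ∈ S ∪ S⁻¹, ρ t ≤ A := by
      obtain ⟨A, hA⟩ := ((hSfin.union hSfin.inv).image ρ).bddAbove
      exact ⟨A, fun t ht => hA (Set.mem_image_of_mem _ ht)⟩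
    refine ⟨1, A, le_refl 1, ?_⟩
    rintro x ⟨hxn, c, hc, hd⟩
    rw [nndist_eq hword] at hd
    have hd' : wordLength S (x⁻¹ * c) ≤ 1 := by exact_mod_cast hd
    by_cases hxA : x ∈ nbhd A (H : Set G)
    · exact hxA
    have hxC : x ∉ C := by
      intro hxC
      exact hxn ⟨hxC, hxA⟩
    interval_cases hwl : wordLength S (x⁻¹ * c)
    · have h1' : x⁻¹ * c = 1 := eq_one_of_wordLength_eq_zero hSgen hwl
      have hcx : c = x := by
        calc c = x * (x⁻¹ * c) := by group
        _ = x := by rw [h1', mul_one]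
      exact absurd (hcx ▸ hc.1) hxC
    · set s := x⁻¹ * c with hs
      have hsgen : s ∈ S ∨ s⁻¹ ∈ S := mem_gen_of_wordLength_eq_one hSgen hwl
      have hsinv : s⁻¹ ∈ S ∪ S⁻¹ := by
        rcases hsgen with h | h
        · exact Or.inr (Set.mem_inv.mpr (by simpa using h))
        · exact Or.inl h
      have hx_img : x ∈ (fun y => y * s⁻¹) '' C := by
        refine ⟨c, hc.1, ?_⟩
        simp only [hs]
        group
      have hx_sd : x ∈ symmDiff C ((fun y => y * s⁻¹) '' C) :=
        Set.mem_symmDiff.mpr (Or.inr ⟨hx_img, hxC⟩)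
      exact nbhd_mono (hA s⁻¹ hsinv) _ (hρ s⁻¹ hx_sd)
  · rintro ⟨r, A, h1, hCCC⟩ g
    rw [hFinite_iff hSfin hSgen hword]
    obtain ⟨lg, hlg, hpg, _⟩ := exists_word hSgen g
    obtain ⟨lg', hlg', hpg', _⟩ := exists_word hSgen g⁻¹
    have hginv : (wordLength S g⁻¹ : ℝ≥0) ≤ (lg'.length : ℝ≥0) := by
      have := wordLength_le_length lg' hlg'
      rw [hpg'] at this
      exact_mod_cast this
    refine ⟨A + (lg'.length : ℝ≥0) + (lg'.length : ℝ≥0) + (lg.length : ℝ≥0), fun x hx => ?_⟩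
    have hAm : A + (lg'.length : ℝ≥0) ≤ A + (lg'.length : ℝ≥0) + (lg'.length : ℝ≥0) + (lg.length : ℝ≥0) := le_self_add.trans le_self_add
    have hAmm : A + (lg'.length : ℝ≥0) + (lg'.length : ℝ≥0) ≤ A + (lg'.length : ℝ≥0) + (lg'.length : ℝ≥0) + (lg.length : ℝ≥0) := le_self_add
    have hAn : A + (lg.length : ℝ≥0) ≤ A + (lg'.length : ℝ≥0) + (lg'.length : ℝ≥0) + (lg.length : ℝ≥0) := add_le_add_left (le_self_add.trans le_self_add) (lg.length : ℝ≥0)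
    have hA0 : A ≤ A + (lg'.length : ℝ≥0) + (lg'.length : ℝ≥0) + (lg.length : ℝ≥0) := le_self_add.trans le_self_add |>.trans le_self_add
    rcases Set.mem_symmDiff.mp hx with ⟨hxC, hxg⟩ | ⟨hxg, hxC⟩
    · -- x ∈ C \ Cg
      by_cases hxA : x ∈ nbhd A (H : Set G)
      · exact nbhd_mono hA0 _ hxA
      have hxC' : x ∈ C \ nbhd A (H : Set G) := ⟨hxC, hxA⟩
      have hxgC : x * g⁻¹ ∉ C := by
        intro h
        exact hxg ⟨x * g⁻¹, h, by group⟩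
      have hnc : x * lg'.prod ∉ C \ nbhd A (H : Set G) := by
        rw [hpg']
        exact fun h => hxgC h.1
      obtain ⟨y, hy, hd⟩ := path_lemma hword h1 hCCC lg' hlg' x hxC' hnc
      rw [hpg'] at hd
      have hxxg : nndist x (x * g⁻¹) ≤ (lg'.length : ℝ≥0) := by
        rw [nndist_eq hword]
        have : x⁻¹ * (x * g⁻¹) = g⁻¹ := by group
        rw [this]
        exact hginv
      have h2 : x * g⁻¹ ∈ nbhd (A + (lg'.length : ℝ≥0)) (H : Set G) := nbhd_trans hy hd
      have h3 : x ∈ nbhd (A + (lg'.length : ℝ≥0) + (lg'.length : ℝ≥0)) (H : Set G) := nbhd_trans h2 hxxg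
      exact nbhd_mono hAmm _ h3
    · -- x ∈ Cg \ C
      obtain ⟨c, hcC, rfl⟩ := hxg
      by_cases hcA : c ∈ nbhd A (H : Set G)
      · refine nbhd_mono hAm _ (nbhd_trans hcA ?_)
        rw [nndist_eq hword]
        have : (c * g)⁻¹ * c = g⁻¹ := by group
        rw [this]
        exact hginv
      have hc' : c ∈ C \ nbhd A (H : Set G) := ⟨hcC, hcA⟩
      have hnc : c * lg.prod ∉ C \ nbhd A (H : Set G) := by
        rw [hpg]
        exact fun h => hxC h.1
      obtain ⟨y, hy, hd⟩ := path_lemma hword h1 hCCC lg hlg c hc' hnc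
      rw [hpg] at hd
      exact nbhd_mono hAn _ (nbhd_trans hy hd)
end Main2

/-- Let `G` be a group with the word metric with respect to a finite
generating set `S`, and `H ≤ G` a subgroup. A subset `C ⊆ G` is `H`-almost invariant iff
`C` is a coarse complementary component of `H`. -/
theorem hAlmostInvariant_iff_coarseComp {G : Type*} [Group G] [MetricSpace G]
    (S : Set G) (hSfin : S.Finite) (hSgen : Subgroup.closure S = ⊤)
    (hword : IsWordMetric S) (H : Subgroup G) (C : Set G) :
    HAlmostInvariant H C ↔ IsCoarseCompComplement (H : Set G) C := by
  exact hAlmostInvariant_iff_coarseComp' S hSfin hSgen hword H C
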